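/- Let A be a 2-zpd algebra, M an A-bimodule, and Θ the linear span of elements am with a ∈ A, m ∈ M and ama = 0. Then every derivation δ: A → M satisfies δ(A) ⊆ Θ. -/

import Mathlib

def IsZpd (F A : Type*) [Field F] [Ring A] [Algebra F A] : Prop :=
  ∀ φ : A →ₗ[F] A →ₗ[F] F, (∀ x y : A, x * y = 0 → φ x y = 0) →
    ∃ τ : A →ₗ[F] F, ∀ x y : A, φ x y = τ (x * y)

def Is2Zpd (F A : Type*) [Field F] [Ring A] [Algebra F A] : Prop :=
  ∀ φ : A →ₗ[F] A →ₗ[F] F, (∀ x y : A, x * y = 0 → y * x = 0 → φ x y = 0) →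
    ∃ τ₁ τ₂ : A →ₗ[F] F, ∀ x y : A, φ x y = τ₁ (x * y) + τ₂ (y * x)

def IsZLpd (F A : Type*) [Field F] [Ring A] [Algebra F A] : Prop :=
  ∀ φ : A →ₗ[F] A →ₗ[F] F, (∀ x y : A, x * y = y * x → φ x y = 0) →
    ∃ τ : A →ₗ[F] F, ∀ x y : A, φ x y = τ (x * y - y * x)

open TensorProduct in
/-- The 2-zpd hypothesis implies `1 ⊗ w - w ⊗ 1` lies in the span of split tensors
`x ⊗ y` with `x * y = y * x = 0`. -/
lemma two_zpd_tensor (F A : Type*) [Field F] [Ring A] [Algebra F A]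
    (h : Is2Zpd F A) (w : A) :
    (1 : A) ⊗ₜ[F] w - w ⊗ₜ[F] (1 : A) ∈
      Submodule.span F {t : A ⊗[F] A | ∃ x y : A, x * y = 0 ∧ y * x = 0 ∧ t = x ⊗ₜ[F] y} := by
  set S := Submodule.span F {t : A ⊗[F] A | ∃ x y : A, x * y = 0 ∧ y * x = 0 ∧ t = x ⊗ₜ[F] y}
  by_contra hu
  obtain ⟨f, hf, hmap⟩ := S.exists_dual_map_eq_bot_of_notMem hu inferInstance
  have hfS : ∀ z ∈ S, f z = 0 := by
    intro z hz
    have : f z ∈ S.map f := Submodule.mem_map_of_mem hz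
    rwa [hmap, Submodule.mem_bot] at this
  set φ : A →ₗ[F] A →ₗ[F] F := LinearMap.compr₂ (TensorProduct.mk F A A) f with hφ
  obtain ⟨τ₁, τ₂, hτ⟩ := h φ (by
    intro x y hxy hyx
    exact hfS _ (Submodule.subset_span ⟨x, y, hxy, hyx, rfl⟩))
  have h1 : f ((1 : A) ⊗ₜ[F] w - w ⊗ₜ[F] (1 : A)) = φ 1 w - φ w 1 := by
    simp [hφ, map_sub]
  rw [hτ, hτ] at h1
  simp at h1
  exact hf (by rw [map_sub]; exact h1)

theorem two_sided_zpd_derivation_range (F A : Type*) [Field F] [Ring A] [Algebra F A]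
    (h : Is2Zpd F A) (M : Type*) [AddCommGroup M] [Module F M]
    (l : A →ₐ[F] Module.End F M) (r : Aᵐᵒᵖ →ₐ[F] Module.End F M)
    (hlr : ∀ (a : A) (b : Aᵐᵒᵖ) (m : M), l a (r b m) = r b (l a m))
    (δ : A →ₗ[F] M)
    (hδ : ∀ x y : A, δ (x * y) = l x (δ y) + r (MulOpposite.op y) (δ x)) :
    ∀ w : A, δ w ∈ Submodule.span F
      {v : M | ∃ (a : A) (m : M), v = l a m ∧ r (MulOpposite.op a) (l a m) = 0} := by
  intro w
  -- δ 1 = 0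
  have hδ1 : δ (1 : A) = 0 := by
    have e := hδ 1 1
    simp only [mul_one, map_one, Module.End.one_apply, MulOpposite.op_one] at e
    have : δ (1 : A) = δ (1 : A) + δ (1 : A) := e
    exact (left_eq_add.mp this)
  -- key fact: generators are in Θ
  have key : ∀ x y : A, x * y = 0 → y * x = 0 →
      r (MulOpposite.op x) (l x (δ y)) = 0 := by
    intro x y hxy hyx
    have e1 : δ (x * (y * x)) = 0 := by rw [hyx, mul_zero, map_zero]
    rw [hδ x (y * x), hδ y x, hyx] at e1
    simp only [MulOpposite.op_zero, map_zero, LinearMap.zero_apply, add_zero, map_add] at e1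
    have e2 : l x (l y (δ x)) = 0 := by
      have : l x (l y (δ x)) = l (x * y) (δ x) := by rw [map_mul]; rfl
      rw [this, hxy, map_zero]; rfl
    rw [e2, zero_add, hlr] at e1
    exact e1
  -- the bilinear map (x, y) ↦ l x (δ y)
  set B : A →ₗ[F] A →ₗ[F] M := LinearMap.mk₂ F (fun x y => l x (δ y))
    (fun x x' y => by show l (x + x') (δ y) = l x (δ y) + l x' (δ y); rw [map_add]; rfl)
    (fun c x y => by show l (c • x) (δ y) = c • l x (δ y); rw [map_smul]; rfl)
    (fun x y y' => by show l x (δ (y + y')) = l x (δ y) + l x (δ y'); rw [map_add, map_add])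
    (fun c x y => by show l x (δ (c • y)) = c • l x (δ y); rw [map_smul, map_smul]) with hB
  set β : TensorProduct F A A →ₗ[F] M := TensorProduct.lift B with hβ
  have hβt : ∀ x y : A, β (x ⊗ₜ[F] y) = l x (δ y) := fun x y => rfl
  have hmem := two_zpd_tensor F A h w
  have hδw : δ w = β ((1 : A) ⊗ₜ[F] w - w ⊗ₜ[F] (1 : A)) := by
    rw [map_sub, hβt, hβt, hδ1, map_zero, map_one]
    simp [Module.End.one_apply]
  rw [hδw]
  have himg : β ((1 : A) ⊗ₜ[F] w - w ⊗ₜ[F] (1 : A)) ∈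
      (Submodule.span F {t : TensorProduct F A A |
        ∃ x y : A, x * y = 0 ∧ y * x = 0 ∧ t = x ⊗ₜ[F] y}).map β :=
    Submodule.mem_map_of_mem hmem
  rw [Submodule.map_span] at himg
  refine Submodule.span_le.mpr ?_ himg
  rintro v ⟨t, ⟨x, y, hxy, hyx, rfl⟩, rfl⟩
  exact Submodule.subset_span ⟨x, δ y, (hβt x y).symm ▸ rfl, key x y hxy hyx⟩
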